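/- Let W be a K-dimensional subspace of ℝ^d with orthonormal basis b⁽¹⁾,…,b⁽ᴷ⁾, and let V ⊆ V' be subspaces of ℝ^d. Define Φ(V) = Σᵢ ‖proj_{V^⊥} b⁽ⁱ⁾‖². Suppose there exist a unit vector v ∈ V' and a unit vector w ∈ W such that w · proj_{V^⊥}(v) ≥ β ≥ 0. Then Φ(V') ≤ Φ(V) − β². -/

import Mathlib

open RealInnerProductSpace

section Aux

variable {E : Type*} [NormedAddCommGroup E] [InnerProductSpace ℝ E]

lemma aux_key (V : Submodule ℝ E) [Submodule.HasOrthogonalProjection V] (x y : E) (hy : y ∈ Vᗮ)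
    (hxy : ⟪x, y⟫ = ‖y‖ ^ 2) :
    ‖y‖ ^ 2 ≤ ‖(Submodule.orthogonalProjectionOnto Vᗮ x : E)‖ ^ 2 := by
  have h0 : ⟪x - (Submodule.orthogonalProjectionOnto Vᗮ x : E), y⟫ = 0 :=
    Submodule.starProjection_inner_eq_zero (K := Vᗮ) x y hy
  have h1 : ⟪(Submodule.orthogonalProjectionOnto Vᗮ x : E), y⟫ = ‖y‖ ^ 2 := by
    have := inner_sub_left (𝕜 := ℝ) x (Submodule.orthogonalProjectionOnto Vᗮ x : E) y
    rw [h0] at this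
    linarith [hxy]
  have h2 := real_inner_le_norm (Submodule.orthogonalProjectionOnto Vᗮ x : E) y
  rw [h1] at h2
  nlinarith [sq_nonneg (‖y‖ - ‖(Submodule.orthogonalProjectionOnto Vᗮ x : E)‖), norm_nonneg y,
    norm_nonneg (Submodule.orthogonalProjectionOnto Vᗮ x : E)]

lemma aux_inner_self_proj (V' : Submodule ℝ E) [Submodule.HasOrthogonalProjection V'] (x : E) :
    ⟪x, (Submodule.orthogonalProjectionOnto V'ᗮ x : E)⟫ = ‖(Submodule.orthogonalProjectionOnto V'ᗮ x : E)‖ ^ 2 := by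
  set p := (Submodule.orthogonalProjectionOnto V'ᗮ x : E) with hp
  have h0 : ⟪x - p, p⟫ = 0 :=
    Submodule.starProjection_inner_eq_zero (K := V'ᗮ) x p (Submodule.orthogonalProjectionOnto V'ᗮ x).2
  have := inner_sub_left (𝕜 := ℝ) x p p
  rw [h0] at this
  have h2 : ⟪p, p⟫ = ‖p‖ ^ 2 := real_inner_self_eq_norm_sq p
  linarith

lemma aux_mono (V V' : Submodule ℝ E) [Submodule.HasOrthogonalProjection V] [Submodule.HasOrthogonalProjection V']
    (hVV' : V ≤ V') (x : E) :
    ‖(Submodule.orthogonalProjectionOnto V'ᗮ x : E)‖ ^ 2 ≤ ‖(Submodule.orthogonalProjectionOnto Vᗮ x : E)‖ ^ 2 :=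
  aux_key V x _ (Submodule.orthogonal_le hVV' (Submodule.orthogonalProjectionOnto V'ᗮ x).2)
    (aux_inner_self_proj V' x)

lemma aux_step (V V' : Submodule ℝ E) [Submodule.HasOrthogonalProjection V] [Submodule.HasOrthogonalProjection V']
    (hVV' : V ≤ V') (u : E) (huV' : u ∈ V') (huV : u ∈ Vᗮ) (hu : ‖u‖ = 1) (x : E) :
    ‖(Submodule.orthogonalProjectionOnto V'ᗮ x : E)‖ ^ 2 + ⟪x, u⟫ ^ 2 ≤
      ‖(Submodule.orthogonalProjectionOnto Vᗮ x : E)‖ ^ 2 := by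
  set p := (Submodule.orthogonalProjectionOnto V'ᗮ x : E) with hp
  set c : ℝ := ⟪x, u⟫ with hc
  have hpu : ⟪p, u⟫ = 0 := by
    rw [real_inner_comm]
    exact (Submodule.mem_orthogonal V' p).1 (Submodule.orthogonalProjectionOnto V'ᗮ x).2 u huV'
  set y : E := p + c • u with hy
  have hyV : y ∈ Vᗮ :=
    Vᗮ.add_mem (Submodule.orthogonal_le hVV' (Submodule.orthogonalProjectionOnto V'ᗮ x).2)
      (Vᗮ.smul_mem c huV)
  have hcu : ‖c • u‖ = |c| := by rw [norm_smul, hu, mul_one, Real.norm_eq_abs]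
  have hny : ‖y‖ ^ 2 = ‖p‖ ^ 2 + c ^ 2 := by
    rw [hy, norm_add_sq_real, real_inner_smul_right, hpu, hcu]
    rw [sq_abs]; ring
  have hxy : ⟪x, y⟫ = ‖y‖ ^ 2 := by
    rw [hy, inner_add_right, real_inner_smul_right, aux_inner_self_proj V' x, ← hc, ← hp, hny]
    ring
  have := aux_key V x y hyV hxy
  rw [hny] at this
  linarith

end Aux

/-- Potential decrease: if `b` is an orthonormal basis of a subspace `W`, `V ⊆ V'` are
subspaces, and there are unit vectors `v ∈ V'`, `w ∈ W` with `⟪w, proj_{V^⊥} v⟫ ≥ β ≥ 0`, then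
`Φ(V') ≤ Φ(V) - β²`, where `Φ(V) = Σᵢ ‖proj_{V^⊥} b i‖²`. -/
theorem potential_decrease {d K : ℕ} (b : Fin K → EuclideanSpace ℝ (Fin d))
    (hb : Orthonormal ℝ b)
    (V V' : Submodule ℝ (EuclideanSpace ℝ (Fin d))) (hVV' : V ≤ V')
    (v : EuclideanSpace ℝ (Fin d)) (hvV' : v ∈ V') (hv : ‖v‖ = 1)
    (w : EuclideanSpace ℝ (Fin d)) (hwW : w ∈ Submodule.span ℝ (Set.range b))
    (hw : ‖w‖ = 1) (β : ℝ) (hβ : 0 ≤ β)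
    (hcorr : β ≤ ⟪w, (Submodule.orthogonalProjectionOnto Vᗮ v : EuclideanSpace ℝ (Fin d))⟫) :
    ∑ i, ‖(Submodule.orthogonalProjectionOnto V'ᗮ (b i) : EuclideanSpace ℝ (Fin d))‖ ^ 2 ≤
      (∑ i, ‖(Submodule.orthogonalProjectionOnto Vᗮ (b i) : EuclideanSpace ℝ (Fin d))‖ ^ 2) - β ^ 2 := by
  set u : EuclideanSpace ℝ (Fin d) := (Submodule.orthogonalProjectionOnto Vᗮ v : EuclideanSpace ℝ (Fin d)) with hu
  have huV : u ∈ Vᗮ := (Submodule.orthogonalProjectionOnto Vᗮ v).2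
  have hsum : (Submodule.orthogonalProjectionOnto V v : EuclideanSpace ℝ (Fin d)) + u = v :=
    Submodule.starProjection_add_starProjection_orthogonal (K := V) v
  have huV' : u ∈ V' := by
    have : u = v - (Submodule.orthogonalProjectionOnto V v : EuclideanSpace ℝ (Fin d)) := by
      rw [eq_sub_iff_add_eq, add_comm]; exact hsum
    rw [this]
    exact V'.sub_mem hvV' (hVV' (Submodule.orthogonalProjectionOnto V v).2)
  have hunorm : ‖u‖ ≤ 1 := by
    have h1 := (Submodule.orthogonalProjectionOnto Vᗮ).le_opNorm v
    have h2 := Submodule.orthogonalProjectionOnto_norm_le Vᗮ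
    have h3 : ‖(Submodule.orthogonalProjectionOnto Vᗮ v : EuclideanSpace ℝ (Fin d))‖ = ‖Submodule.orthogonalProjectionOnto Vᗮ v‖ := rfl
    rw [hu, h3]
    rw [hv] at h1
    nlinarith [norm_nonneg ((Submodule.orthogonalProjectionOnto Vᗮ) v)]
  by_cases hu0 : u = 0
  · have hβ0 : β = 0 := by
      have : β ≤ 0 := by simpa [← hu, hu0] using hcorr
      linarith
    rw [hβ0]
    simp only [sub_zero, ne_eq, OfNat.ofNat_ne_zero, not_false_eq_true, zero_pow]
    exact Finset.sum_le_sum fun i _ => aux_mono V V' hVV' (b i)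
  · have hupos : (0 : ℝ) < ‖u‖ := norm_pos_iff.2 hu0
    set u2 : EuclideanSpace ℝ (Fin d) := ‖u‖⁻¹ • u with hu2
    have hu2n : ‖u2‖ = 1 := by
      rw [hu2, norm_smul, Real.norm_eq_abs, abs_inv, abs_norm, inv_mul_cancel₀ hupos.ne']
    have hu2V : u2 ∈ Vᗮ := Vᗮ.smul_mem _ huV
    have hu2V' : u2 ∈ V' := V'.smul_mem _ huV'
    have hstep : ∀ i ∈ Finset.univ (α := Fin K),
        ‖(Submodule.orthogonalProjectionOnto V'ᗮ (b i) : EuclideanSpace ℝ (Fin d))‖ ^ 2 + ⟪b i, u2⟫ ^ 2 ≤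
          ‖(Submodule.orthogonalProjectionOnto Vᗮ (b i) : EuclideanSpace ℝ (Fin d))‖ ^ 2 := fun i _ =>
      aux_step V V' hVV' u2 hu2V' hu2V hu2n (b i)
    have hsum2 := Finset.sum_le_sum hstep
    rw [Finset.sum_add_distrib] at hsum2
    -- it suffices to show β ^ 2 ≤ ∑ i, ⟪b i, u2⟫ ^ 2
    have hβsq : β ^ 2 ≤ ∑ i, ⟪b i, u2⟫ ^ 2 := by
      obtain ⟨c, hc⟩ := Submodule.mem_span_range_iff_exists_fun ℝ |>.1 hwW
      have hc2 : ∑ i, c i * c i = 1 := by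
        have h := hb.inner_sum c c Finset.univ
        rw [hc, real_inner_self_eq_norm_sq, hw] at h
        simpa using h.symm
      have hwu : ⟪w, u2⟫ = ∑ i, c i * ⟪b i, u2⟫ := by
        rw [← hc, sum_inner]
        simp [real_inner_smul_left, Finset.mul_sum, mul_assoc]
      have hβwu : β ≤ ⟪w, u2⟫ := by
        have h1 : ⟪w, u2⟫ = ‖u‖⁻¹ * ⟪w, u⟫ := real_inner_smul_right w u ‖u‖⁻¹
        have h2 : (1 : ℝ) ≤ ‖u‖⁻¹ := (one_le_inv₀ hupos).2 hunorm
        have h3 : β ≤ ⟪w, u⟫ := hcorr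
        nlinarith
      have hCS := Finset.sum_mul_sq_le_sq_mul_sq Finset.univ c (fun i => ⟪b i, u2⟫)
      rw [← hwu] at hCS
      have hc2' : ∑ i, c i ^ 2 = 1 := by simpa [sq] using hc2
      rw [hc2', one_mul] at hCS
      nlinarith
    linarith
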